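/- Suppose g : ℝⁿ → ℝ is continuous with 0 < inf g ≤ sup g < ∞ and satisfies |x|^β·|g(x) − 1| bounded as |x| → ∞ for some β > 2. Let g₁(r) = sup_{|x|=r} g(x). Then there exists a constant C such that for all r ≥ 1: ∫_1^r (∫_1^l n·s^{n−1}·g₁(s) ds)^{1/n} dl ≥ r²/2 + C. -/

import Mathlib

open Set Filter MeasureTheory intervalIntegral

lemma auxB (n : ℕ) (hn : 1 ≤ n) {l X E : ℝ} (hl : 1 ≤ l) (hX : 0 ≤ X)
    (hE0 : 0 ≤ E) (hE : l ^ n - X ≤ E) : l - E / l ^ (n - 1) ≤ X ^ ((1:ℝ)/n) := by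
  have hl0 : (0:ℝ) < l := lt_of_lt_of_le one_pos hl
  have hlp : (0:ℝ) < l ^ (n-1) := pow_pos hl0 _
  set a := X ^ ((1:ℝ)/n) with ha
  have ha0 : 0 ≤ a := Real.rpow_nonneg hX _
  have han : a ^ n = X := by
    rw [ha, one_div]
    exact Real.rpow_inv_natCast_pow hX (by omega)
  rcases le_or_gt l a with h | h
  · have : 0 ≤ E / l ^ (n-1) := div_nonneg hE0 hlp.le
    linarith
  · have key : (l - a) * l ^ (n-1) ≤ E := by
      have h1 : a ^ n ≤ a * l ^ (n-1) := by
        calc a ^ n = a * a ^ (n-1) := by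
              rw [← pow_succ']; congr 1; omega
          _ ≤ a * l ^ (n-1) :=
              mul_le_mul_of_nonneg_left (pow_le_pow_left₀ ha0 h.le _) ha0
      have h2 : l ^ n = l * l ^ (n-1) := by rw [← pow_succ']; congr 1; omega
      nlinarith [h1, h2, hE, han]
    have := (div_le_div_iff_of_pos_right hlp).mpr key
    rw [mul_div_cancel_right₀ _ hlp.ne'] at this
    linarith [this]

set_option maxHeartbeats 1000000 in
theorem stmt14 (n : ℕ) (hn : 3 ≤ n) (g : EuclideanSpace ℝ (Fin n) → ℝ)
    (hg : Continuous g) (m M : ℝ) (hm : 0 < m)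
    (hbounds : ∀ x, m ≤ g x ∧ g x ≤ M)
    (β C₀ : ℝ) (hβ : 2 < β)
    (hdecay : ∀ x : EuclideanSpace ℝ (Fin n), 1 ≤ ‖x‖ → ‖x‖ ^ β * |g x - 1| ≤ C₀) :
    ∃ C : ℝ, ∀ r : ℝ, 1 ≤ r → r ^ 2 / 2 + C ≤
      ∫ l in (1:ℝ)..r,
        (∫ s in (1:ℝ)..l,
            (n : ℝ) * s ^ (n-1) * sSup (g '' {x : EuclideanSpace ℝ (Fin n) | ‖x‖ = s}))
          ^ ((1:ℝ)/n) := by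
  have hn3 : (3:ℝ) ≤ (n:ℝ) := by exact_mod_cast hn
  -- the exponent b
  set b : ℝ := min β (5/2) with hbdef
  have hb2 : 2 < b := lt_min hβ (by norm_num)
  have hbβ : b ≤ β := min_le_left _ _
  have hb52 : b ≤ 5/2 := min_le_right _ _
  have hnb : (1:ℝ)/2 ≤ (n:ℝ) - b := by linarith
  -- a unit vector
  haveI : Nonempty (Fin n) := ⟨⟨0, by omega⟩⟩
  obtain ⟨u₀, hu₀⟩ : ∃ u : EuclideanSpace ℝ (Fin n), ‖u‖ = 1 :=
    exists_norm_eq (EuclideanSpace ℝ (Fin n)) (by norm_num)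
  have hC₀ : 0 ≤ C₀ :=
    le_trans (mul_nonneg (Real.rpow_nonneg (norm_nonneg _) _) (abs_nonneg _))
      (hdecay u₀ (by rw [hu₀]))
  set g1 : ℝ → ℝ := fun s => sSup (g '' {x : EuclideanSpace ℝ (Fin n) | ‖x‖ = s}) with hg1def
  -- continuity of g1 on [1, ∞)
  have hGcont : Continuous fun s : ℝ =>
      sSup ((fun u : EuclideanSpace ℝ (Fin n) => g (s • u)) '' Metric.sphere 0 1) := by
    apply IsCompact.continuous_sSup (isCompact_sphere (0 : EuclideanSpace ℝ (Fin n)) 1)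
    exact hg.comp (continuous_fst.smul continuous_snd)
  have hEq : ∀ s : ℝ, 0 < s →
      g '' {x : EuclideanSpace ℝ (Fin n) | ‖x‖ = s}
        = (fun u : EuclideanSpace ℝ (Fin n) => g (s • u)) '' Metric.sphere 0 1 := by
    intro s hs
    ext y
    constructor
    · rintro ⟨x, hx, rfl⟩
      have hx' : ‖x‖ = s := hx
      refine ⟨s⁻¹ • x, ?_, by simp [smul_inv_smul₀ hs.ne']⟩
      simp [mem_sphere_iff_norm, norm_smul, hx', abs_of_pos hs, inv_mul_cancel₀ hs.ne']
    · rintro ⟨u, hu, rfl⟩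
      have hu' : ‖u‖ = 1 := by simpa [mem_sphere_iff_norm] using hu
      exact ⟨s • u, by simp [norm_smul, hu', abs_of_pos hs], rfl⟩
  have hg1cont : ContinuousOn g1 (Ici 1) := by
    apply hGcont.continuousOn.congr
    intro s hs
    exact congrArg sSup (hEq s (lt_of_lt_of_le one_pos hs))
  -- bounds on g1
  have hbdd : ∀ s : ℝ, BddAbove (g '' {x : EuclideanSpace ℝ (Fin n) | ‖x‖ = s}) := fun s =>
    ⟨M, by rintro y ⟨x, -, rfl⟩; exact (hbounds x).2⟩
  have hnorm : ∀ s : ℝ, 0 < s → ‖s • u₀‖ = s := fun s hs => by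
    simp [norm_smul, hu₀, abs_of_pos hs]
  have hg1m : ∀ s : ℝ, 1 ≤ s → m ≤ g1 s := by
    intro s hs
    exact le_trans (hbounds (s • u₀)).1
      (le_csSup (hbdd s) ⟨s • u₀, hnorm s (lt_of_lt_of_le one_pos hs), rfl⟩)
  have hg1low : ∀ s : ℝ, 1 ≤ s → 1 - C₀ * s ^ (-b) ≤ g1 s := by
    intro s hs
    have hs0 : (0:ℝ) < s := lt_of_lt_of_le one_pos hs
    have hx := hnorm s hs0
    have hsb : (0:ℝ) < s ^ β := Real.rpow_pos_of_pos hs0 _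
    have h1 : |g (s • u₀) - 1| ≤ C₀ / s ^ β := by
      rw [le_div_iff₀ hsb]
      have h2 := hdecay (s • u₀) (by rw [hx]; exact hs)
      rw [hx] at h2
      linarith [h2, mul_comm (s ^ β) |g (s • u₀) - 1|]
    have h3 : C₀ / s ^ β ≤ C₀ * s ^ (-b) := by
      rw [div_eq_mul_inv, ← Real.rpow_neg hs0.le]
      exact mul_le_mul_of_nonneg_left
        (Real.rpow_le_rpow_of_exponent_le hs (by linarith)) hC₀
    have h4 : 1 - C₀ * s ^ (-b) ≤ g (s • u₀) := by
      have := abs_le.mp h1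
      linarith [this.1, h3]
    exact le_trans h4 (le_csSup (hbdd s) ⟨s • u₀, hx, rfl⟩)
  -- the inner integral
  set f : ℝ → ℝ := fun s => (n:ℝ) * s ^ (n-1) * g1 s with hfdef
  set I : ℝ → ℝ := fun l => ∫ s in (1:ℝ)..l, f s with hIdef
  have hf_cont : ContinuousOn f (Ici 1) :=
    ((continuous_const.mul (continuous_pow (n-1))).continuousOn).mul hg1cont
  have hInt_f : ∀ l : ℝ, 1 ≤ l → IntervalIntegrable f volume 1 l := by
    intro l hl
    apply ContinuousOn.intervalIntegrable
    apply hf_cont.mono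
    rw [uIcc_of_le hl]
    exact Icc_subset_Ici_self
  -- nonnegativity of I
  have hIpos : ∀ l : ℝ, 1 ≤ l → 0 ≤ I l := by
    intro l hl
    apply intervalIntegral.integral_nonneg hl
    intro s hs
    have hs1 : (1:ℝ) ≤ s := hs.1
    have : (0:ℝ) ≤ (n:ℝ) * s ^ (n-1) :=
      mul_nonneg (by positivity) (pow_nonneg (by linarith) _)
    exact mul_nonneg this (le_trans hm.le (hg1m s hs1))
  -- key lower bound for I
  set K : ℝ := 2 * (n:ℝ) * C₀ with hKdef
  have hK0 : 0 ≤ K := by positivity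
  have key1 : ∀ l : ℝ, 1 ≤ l → l ^ n - (1 + K * l ^ ((n:ℝ) - b)) ≤ I l := by
    intro l hl
    have hint2 : IntervalIntegrable (fun s : ℝ => (n:ℝ) * s ^ (n-1) * (1 - C₀ * s ^ (-b)))
        volume 1 l := by
      apply ContinuousOn.intervalIntegrable
      rw [uIcc_of_le hl]
      apply ContinuousOn.mul ((continuous_const.mul (continuous_pow (n-1))).continuousOn)
      apply ContinuousOn.sub continuousOn_const
      apply ContinuousOn.mul continuousOn_const
      apply ContinuousOn.rpow_const continuousOn_id
      exact fun x hx => Or.inl (ne_of_gt (lt_of_lt_of_le one_pos hx.1))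
    have h1 : (∫ s in (1:ℝ)..l, (n:ℝ) * s ^ (n-1) * (1 - C₀ * s ^ (-b))) ≤ I l := by
      apply intervalIntegral.integral_mono_on hl hint2 (hInt_f l hl)
      intro s hs
      have hs1 : (1:ℝ) ≤ s := hs.1
      exact mul_le_mul_of_nonneg_left (hg1low s hs1)
        (mul_nonneg (by positivity) (pow_nonneg (by linarith) _))
    have hintA : IntervalIntegrable (fun s : ℝ => (n:ℝ) * s ^ (n-1)) volume 1 l :=
      (continuous_const.mul (continuous_pow (n-1))).intervalIntegrable 1 l
    have hintB : IntervalIntegrable (fun s : ℝ => C₀ * ((n:ℝ) * s ^ ((n:ℝ) - 1 - b)))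
        volume 1 l := by
      apply ContinuousOn.intervalIntegrable
      rw [uIcc_of_le hl]
      apply ContinuousOn.mul continuousOn_const
      apply ContinuousOn.mul continuousOn_const
      apply ContinuousOn.rpow_const continuousOn_id
      exact fun x hx => Or.inl (ne_of_gt (lt_of_lt_of_le one_pos hx.1))
    have h2 : (∫ s in (1:ℝ)..l, (n:ℝ) * s ^ (n-1) * (1 - C₀ * s ^ (-b)))
        = (∫ s in (1:ℝ)..l, (n:ℝ) * s ^ (n-1))
          - ∫ s in (1:ℝ)..l, C₀ * ((n:ℝ) * s ^ ((n:ℝ) - 1 - b)) := by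
      rw [← intervalIntegral.integral_sub hintA hintB]
      apply intervalIntegral.integral_congr
      intro s hs
      rw [uIcc_of_le hl] at hs
      have hs0 : (0:ℝ) < s := lt_of_lt_of_le one_pos hs.1
      have hpow : (s:ℝ) ^ (n-1) * s ^ (-b) = s ^ ((n:ℝ) - 1 - b) := by
        rw [← Real.rpow_natCast s (n-1), ← Real.rpow_add hs0]
        congr 1
        push_cast [Nat.cast_sub (by omega : 1 ≤ n)]
        ring
      simp only
      rw [← hpow]
      ring
    have hA : (∫ s in (1:ℝ)..l, (n:ℝ) * s ^ (n-1)) = l ^ n - 1 := by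
      rw [intervalIntegral.integral_const_mul, integral_pow]
      have hnn : n - 1 + 1 = n := by omega
      rw [hnn, one_pow]
      have : ((n:ℝ)) ≠ 0 := by positivity
      field_simp
      push_cast [Nat.cast_sub (by omega : 1 ≤ n)]
      ring
    have hB : (∫ s in (1:ℝ)..l, C₀ * ((n:ℝ) * s ^ ((n:ℝ) - 1 - b)))
        = C₀ * ((n:ℝ) * ((l ^ ((n:ℝ) - b) - 1) / ((n:ℝ) - b))) := by
      rw [intervalIntegral.integral_const_mul, intervalIntegral.integral_const_mul,
        integral_rpow (Or.inl (by linarith : (-1:ℝ) < (n:ℝ) - 1 - b))]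
      have he : (n:ℝ) - 1 - b + 1 = (n:ℝ) - b := by ring
      rw [he, Real.one_rpow]
    have hx1 : (1:ℝ) ≤ l ^ ((n:ℝ) - b) := Real.one_le_rpow hl (by linarith)
    have hdiv : (l ^ ((n:ℝ) - b) - 1) / ((n:ℝ) - b) ≤ 2 * l ^ ((n:ℝ) - b) := by
      rw [div_le_iff₀ (by linarith)]
      nlinarith [hx1]
    have h3 : C₀ * ((n:ℝ) * ((l ^ ((n:ℝ) - b) - 1) / ((n:ℝ) - b))) ≤ K * l ^ ((n:ℝ) - b) := by
      have h4 := mul_le_mul_of_nonneg_left hdiv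
        (mul_nonneg hC₀ (by positivity : (0:ℝ) ≤ (n:ℝ)))
      rw [hKdef]
      nlinarith [h4]
    rw [h2, hA, hB] at h1
    linarith [h1, h3]
  -- choose the constant
  refine ⟨-(1/2) - 1/((n:ℝ) - 2) - K / (b - 2), ?_⟩
  intro r hr
  -- pointwise lower bound for the outer integrand
  have hpt : ∀ l ∈ Icc (1:ℝ) r,
      l - (l ^ ((1:ℝ) - (n:ℝ)) + K * l ^ ((1:ℝ) - b)) ≤ I l ^ ((1:ℝ)/n) := by
    intro l hl
    have hl1 : (1:ℝ) ≤ l := hl.1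
    have hl0 : (0:ℝ) < l := lt_of_lt_of_le one_pos hl1
    have hEφ : (1 + K * l ^ ((n:ℝ) - b)) / l ^ (n-1)
        = l ^ ((1:ℝ) - (n:ℝ)) + K * l ^ ((1:ℝ) - b) := by
      have hpow1 : (l:ℝ) ^ (n-1) = l ^ ((n:ℝ) - 1) := by
        rw [← Real.rpow_natCast l (n-1)]
        congr 1
        push_cast [Nat.cast_sub (by omega : 1 ≤ n)]
        ring
      have e1 : l ^ ((1:ℝ) - (n:ℝ)) * l ^ ((n:ℝ) - 1) = 1 := by
        rw [← Real.rpow_add hl0]; norm_num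
      have e2 : l ^ ((1:ℝ) - b) * l ^ ((n:ℝ) - 1) = l ^ ((n:ℝ) - b) := by
        rw [← Real.rpow_add hl0]; congr 1; ring
      rw [hpow1, div_eq_iff (by positivity : (l:ℝ) ^ ((n:ℝ)-1) ≠ 0)]
      linear_combination -e1 - K * e2
    have := auxB n (by omega) hl1 (hIpos l hl1)
      (by positivity : (0:ℝ) ≤ 1 + K * l ^ ((n:ℝ) - b)) (by linarith [key1 l hl1])
    rw [hEφ] at this
    exact this
  -- integrability of both sides on [1, r]
  have hre : uIcc (1:ℝ) r = Icc 1 r := uIcc_of_le hr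
  have hint_lhs : IntervalIntegrable
      (fun l : ℝ => l - (l ^ ((1:ℝ) - (n:ℝ)) + K * l ^ ((1:ℝ) - b))) volume 1 r := by
    apply ContinuousOn.intervalIntegrable
    rw [hre]
    apply ContinuousOn.sub continuousOn_id
    apply ContinuousOn.add
    · apply ContinuousOn.rpow_const continuousOn_id
      exact fun x hx => Or.inl (ne_of_gt (lt_of_lt_of_le one_pos hx.1))
    · apply ContinuousOn.mul continuousOn_const
      apply ContinuousOn.rpow_const continuousOn_id
      exact fun x hx => Or.inl (ne_of_gt (lt_of_lt_of_le one_pos hx.1))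
  have hint_rhs : IntervalIntegrable (fun l : ℝ => I l ^ ((1:ℝ)/n)) volume 1 r := by
    apply ContinuousOn.intervalIntegrable
    rw [hre]
    have hIcont : ContinuousOn I (Icc 1 r) := by
      rw [← hre]
      apply continuousOn_primitive_interval
      rw [hre]
      exact (hf_cont.mono (Icc_subset_Ici_self)).integrableOn_compact isCompact_Icc
    exact hIcont.rpow_const (fun x hx => Or.inr (by positivity))
  have hmono := intervalIntegral.integral_mono_on hr hint_lhs hint_rhs hpt
  have hre2 := hre
  have hint1 : IntervalIntegrable (fun l : ℝ => l ^ ((1:ℝ) - (n:ℝ))) volume 1 r := by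
    apply ContinuousOn.intervalIntegrable
    rw [hre]
    apply ContinuousOn.rpow_const continuousOn_id
    exact fun x hx => Or.inl (ne_of_gt (lt_of_lt_of_le one_pos hx.1))
  have hint2 : IntervalIntegrable (fun l : ℝ => K * l ^ ((1:ℝ) - b)) volume 1 r := by
    apply ContinuousOn.intervalIntegrable
    rw [hre]
    apply ContinuousOn.mul continuousOn_const
    apply ContinuousOn.rpow_const continuousOn_id
    exact fun x hx => Or.inl (ne_of_gt (lt_of_lt_of_le one_pos hx.1))
  have hzero : (0:ℝ) ∉ uIcc (1:ℝ) r := by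
    rw [hre]; exact fun h => absurd h.1 (by norm_num)
  have hne1 : ((1:ℝ) - (n:ℝ)) ≠ -1 := by intro h; linarith
  have hne2 : ((1:ℝ) - b) ≠ -1 := by intro h; linarith
  refine le_trans ?_ hmono
  rw [intervalIntegral.integral_sub (continuous_id'.intervalIntegrable 1 r) (hint1.add hint2),
    intervalIntegral.integral_add hint1 hint2, integral_id,
    intervalIntegral.integral_const_mul,
    integral_rpow (Or.inr ⟨hne1, hzero⟩), integral_rpow (Or.inr ⟨hne2, hzero⟩)]
  simp only [Real.one_rpow, one_pow]
  have hd1 : (0:ℝ) < (n:ℝ) - 2 := by linarith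
  have hd2 : (0:ℝ) < b - 2 := by linarith
  have ht : (0:ℝ) ≤ r ^ ((1:ℝ) - (n:ℝ) + 1) := Real.rpow_nonneg (by linarith) _
  have hu : (0:ℝ) ≤ r ^ ((1:ℝ) - b + 1) := Real.rpow_nonneg (by linarith) _
  have c1 : (r ^ ((1:ℝ) - (n:ℝ) + 1) - 1) / ((1:ℝ) - (n:ℝ) + 1)
      = -((r ^ ((1:ℝ) - (n:ℝ) + 1) - 1) / ((n:ℝ) - 2)) := by
    rw [show (1:ℝ) - (n:ℝ) + 1 = -((n:ℝ) - 2) by ring, div_neg]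
  have c2 : (r ^ ((1:ℝ) - b + 1) - 1) / ((1:ℝ) - b + 1)
      = -((r ^ ((1:ℝ) - b + 1) - 1) / (b - 2)) := by
    rw [show (1:ℝ) - b + 1 = -(b - 2) by ring, div_neg]
  rw [c1, c2]
  have A : (-1:ℝ)/((n:ℝ) - 2) ≤ (r ^ ((1:ℝ) - (n:ℝ) + 1) - 1) / ((n:ℝ) - 2) :=
    (div_le_div_iff_of_pos_right hd1).mpr (by linarith)
  have B : (-1:ℝ)/(b - 2) ≤ (r ^ ((1:ℝ) - b + 1) - 1) / (b - 2) :=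
    (div_le_div_iff_of_pos_right hd2).mpr (by linarith)
  have key : (r ^ 2 - 1) / 2 - (-((r ^ ((1:ℝ) - (n:ℝ) + 1) - 1) / ((n:ℝ) - 2))
        + K * -((r ^ ((1:ℝ) - b + 1) - 1) / (b - 2)))
      = r ^ 2 / 2 + (-(1 / 2) - 1 / ((n:ℝ) - 2) - K / (b - 2))
        + (r ^ ((1:ℝ) - (n:ℝ) + 1) / ((n:ℝ) - 2) + K * (r ^ ((1:ℝ) - b + 1) / (b - 2))) := by
    field_simp
    ring
  rw [key]
  have P1 : (0:ℝ) ≤ r ^ ((1:ℝ) - (n:ℝ) + 1) / ((n:ℝ) - 2) := div_nonneg ht hd1.le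
  have P2 : (0:ℝ) ≤ K * (r ^ ((1:ℝ) - b + 1) / (b - 2)) :=
    mul_nonneg hK0 (div_nonneg hu hd2.le)
  linarith [P1, P2]
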